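/- If G is a connected graph with m ≥ 1 edges and maximum degree Δ, then cDSO(G) ≥ m·√(Δ² + 1)/Δ, with equality if and only if G is the star S_{m+1}. -/

import Mathlib

open SimpleGraph Finset Real

noncomputable def HSO {V : Type*} [Fintype V] (G : SimpleGraph V) : ℝ :=
  letI := Classical.decRel G.Adj
  ∑ e ∈ G.edgeFinset, Sym2.lift
    ⟨fun x y => Real.sqrt ((G.degree x : ℝ) ^ 2 + (G.degree y : ℝ) ^ 2) /
      min (G.degree x : ℝ) (G.degree y : ℝ),
     fun x y => by simp [add_comm, min_comm]⟩ e

noncomputable def SO {V : Type*} [Fintype V] (G : SimpleGraph V) : ℝ :=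
  letI := Classical.decRel G.Adj
  ∑ e ∈ G.edgeFinset, Sym2.lift
    ⟨fun x y => Real.sqrt ((G.degree x : ℝ) ^ 2 + (G.degree y : ℝ) ^ 2),
     fun x y => by simp [add_comm]⟩ e

noncomputable def cDSO {V : Type*} [Fintype V] (G : SimpleGraph V) : ℝ :=
  letI := Classical.decRel G.Adj
  ∑ e ∈ G.edgeFinset, Sym2.lift
    ⟨fun x y => Real.sqrt ((G.degree x : ℝ) ^ 2 + (G.degree y : ℝ) ^ 2) /
      max (G.degree x : ℝ) (G.degree y : ℝ),
     fun x y => by simp [add_comm, max_comm]⟩ e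

noncomputable def M1 {V : Type*} [Fintype V] (G : SimpleGraph V) : ℝ :=
  letI := Classical.decRel G.Adj
  ∑ e ∈ G.edgeFinset, Sym2.lift
    ⟨fun x y => (G.degree x : ℝ) + (G.degree y : ℝ),
     fun x y => by simp [add_comm]⟩ e

def IsRegularGraph {V : Type*} [Fintype V] (G : SimpleGraph V) : Prop :=
  letI := Classical.decRel G.Adj
  ∃ k, G.IsRegularOfDegree k

def addEdge {V : Type*} (G : SimpleGraph V) (u v : V) : SimpleGraph V :=
  G ⊔ SimpleGraph.fromEdgeSet {s(u, v)}

lemma key_ineq (a b D : ℝ) (ha : 1 ≤ a) (hab : a ≤ b) (hbD : b ≤ D) :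
    Real.sqrt (D^2+1)/D ≤ Real.sqrt (a^2+b^2)/b ∧
    (Real.sqrt (a^2+b^2)/b = Real.sqrt (D^2+1)/D ↔ (a = 1 ∧ b = D)) := by
  have hb : (0:ℝ) < b := lt_of_lt_of_le one_pos (ha.trans hab)
  have hD : (0:ℝ) < D := lt_of_lt_of_le hb hbD
  have hab' : b ≤ a * D := by nlinarith
  have h2 : (D^2+1) * b^2 ≤ (a^2+b^2) * D^2 := by nlinarith
  have e1 : Real.sqrt (D^2+1) * b = Real.sqrt ((D^2+1) * b^2) := by
    rw [Real.sqrt_mul (by positivity), Real.sqrt_sq hb.le]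
  have e2 : Real.sqrt (a^2+b^2) * D = Real.sqrt ((a^2+b^2) * D^2) := by
    rw [Real.sqrt_mul (by positivity), Real.sqrt_sq hD.le]
  constructor
  · rw [div_le_div_iff₀ hD hb, e1, e2]
    exact Real.sqrt_le_sqrt h2
  · rw [div_eq_div_iff hb.ne' hD.ne', e1, e2]
    rw [Real.sqrt_inj (by positivity) (by positivity)]
    constructor
    · intro h
      have h3 : a * D = b := by nlinarith
      constructor <;> nlinarith
    · rintro ⟨rfl, rfl⟩; ring

lemma key_ineq2 (a b D : ℝ) (ha : 1 ≤ a) (hb : 1 ≤ b) (haD : a ≤ D) (hbD : b ≤ D) :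
    Real.sqrt (D^2+1)/D ≤ Real.sqrt (a^2+b^2)/max a b ∧
    (Real.sqrt (a^2+b^2)/max a b = Real.sqrt (D^2+1)/D ↔ (min a b = 1 ∧ max a b = D)) := by
  rcases le_total a b with h | h
  · rw [max_eq_right h, min_eq_left h]
    exact key_ineq a b D ha h hbD
  · rw [max_eq_left h, min_eq_right h, add_comm (a^2)]
    exact key_ineq b a D hb h haD

lemma cDSO_eq {V : Type*} [Fintype V] (G : SimpleGraph V) [DecidableRel G.Adj] :
    cDSO G = ∑ e ∈ G.edgeFinset, Sym2.lift
    ⟨fun x y => Real.sqrt ((G.degree x : ℝ) ^ 2 + (G.degree y : ℝ) ^ 2) /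
      max (G.degree x : ℝ) (G.degree y : ℝ),
     fun x y => by simp [add_comm, max_comm]⟩ e := by
  unfold cDSO
  congr!

instance instDecCBG (V W : Type*) : DecidableRel (completeBipartiteGraph V W).Adj :=
  fun _ _ => inferInstanceAs (Decidable (_ ∨ _))

lemma cbg_degree_inl (m : ℕ) (a : Fin 1) :
    (completeBipartiteGraph (Fin 1) (Fin m)).degree (Sum.inl a) = m := by
  have h : (completeBipartiteGraph (Fin 1) (Fin m)).neighborFinset (Sum.inl a)
      = (univ : Finset (Fin m)).map ⟨Sum.inr, Sum.inr_injective⟩ := by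
    ext w
    cases w <;> simp
  rw [SimpleGraph.degree, h, card_map, card_univ, Fintype.card_fin]

lemma cbg_degree_inr (m : ℕ) (b : Fin m) :
    (completeBipartiteGraph (Fin 1) (Fin m)).degree (Sum.inr b) = 1 := by
  have h : (completeBipartiteGraph (Fin 1) (Fin m)).neighborFinset (Sum.inr b)
      = {Sum.inl 0} := by
    ext w
    cases w with
    | inl a => simp [Subsingleton.elim a 0]
    | inr c => simp
  rw [SimpleGraph.degree, h, card_singleton]

lemma iso_degree {V W : Type*} [Fintype V] [Fintype W] {G : SimpleGraph V} {H : SimpleGraph W}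
    [DecidableRel G.Adj] [DecidableRel H.Adj] (f : G ≃g H) (x : V) :
    G.degree x = H.degree (f x) := by
  rw [← card_neighborSet_eq_degree, ← card_neighborSet_eq_degree]
  exact Fintype.card_congr (f.mapNeighborSet x)

theorem stmt12 {V : Type*} [Fintype V] (G : SimpleGraph V) [DecidableRel G.Adj]
    (hconn : G.Connected) (m : ℕ) (hm : m = G.edgeFinset.card) (hm1 : 1 ≤ m) :
    (m : ℝ) * Real.sqrt ((G.maxDegree : ℝ) ^ 2 + 1) / G.maxDegree ≤ cDSO G ∧
    (cDSO G = (m : ℝ) * Real.sqrt ((G.maxDegree : ℝ) ^ 2 + 1) / G.maxDegree ↔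
      Nonempty (G ≃g completeBipartiteGraph (Fin 1) (Fin m))) := by
  have _instDE : DecidableEq V := Classical.decEq V
  set Δ := G.maxDegree with hΔdef
  set c : ℝ := Real.sqrt ((Δ : ℝ)^2 + 1) / Δ with hcdef
  set F : Sym2 V → ℝ := fun e => Sym2.lift
    ⟨fun x y => Real.sqrt ((G.degree x : ℝ) ^ 2 + (G.degree y : ℝ) ^ 2) /
      max (G.degree x : ℝ) (G.degree y : ℝ),
     fun x y => by simp [add_comm, max_comm]⟩ e with hFdef
  have hdeg1 : ∀ {x y : V}, G.Adj x y → 1 ≤ G.degree x := by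
    intro x y hxy
    exact (G.degree_pos_iff_exists_adj x).mpr ⟨y, hxy⟩
  have hΔ1 : 1 ≤ Δ := by
    have hEne : G.edgeFinset.Nonempty := by
      rw [← Finset.card_pos, ← hm]; omega
    obtain ⟨e, he⟩ := hEne
    induction e using Sym2.ind with
    | _ x y =>
      rw [mem_edgeFinset, mem_edgeSet] at he
      exact le_trans (hdeg1 he) (G.degree_le_maxDegree x)
  have hkey : ∀ {x y : V}, G.Adj x y →
      c ≤ F s(x, y) ∧ (F s(x, y) = c ↔
        (min (G.degree x) (G.degree y) = 1 ∧ max (G.degree x) (G.degree y) = Δ)) := by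
    intro x y hxy
    have h1x : (1:ℝ) ≤ G.degree x := by exact_mod_cast hdeg1 hxy
    have h1y : (1:ℝ) ≤ G.degree y := by exact_mod_cast hdeg1 hxy.symm
    have hxΔ : (G.degree x : ℝ) ≤ Δ := by exact_mod_cast G.degree_le_maxDegree x
    have hyΔ : (G.degree y : ℝ) ≤ Δ := by exact_mod_cast G.degree_le_maxDegree y
    have hk := key_ineq2 (G.degree x) (G.degree y) Δ h1x h1y hxΔ hyΔ
    have hF : F s(x, y) = Real.sqrt ((G.degree x : ℝ) ^ 2 + (G.degree y : ℝ) ^ 2) /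
        max (G.degree x : ℝ) (G.degree y : ℝ) := by simp [hFdef]
    rw [hF]
    refine ⟨hk.1, ?_⟩
    rw [hk.2, ← Nat.cast_min, ← Nat.cast_max]
    constructor
    · rintro ⟨h1, h2⟩
      exact ⟨by exact_mod_cast h1, by exact_mod_cast h2⟩
    · rintro ⟨h1, h2⟩
      exact ⟨by exact_mod_cast h1, by exact_mod_cast h2⟩
  have hconst : (m : ℝ) * Real.sqrt ((Δ : ℝ)^2 + 1) / Δ = ∑ _e ∈ G.edgeFinset, c := by
    rw [Finset.sum_const, ← hm, nsmul_eq_mul, hcdef, mul_div_assoc]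
  have hFge : ∀ e ∈ G.edgeFinset, c ≤ F e := by
    intro e
    induction e using Sym2.ind with
    | _ x y =>
      intro he
      rw [mem_edgeFinset, mem_edgeSet] at he
      exact (hkey he).1
  have hle : (m : ℝ) * Real.sqrt ((Δ : ℝ)^2 + 1) / Δ ≤ cDSO G := by
    rw [hconst, cDSO_eq]
    exact Finset.sum_le_sum hFge
  refine ⟨hle, ?_⟩
  have hiff1 : cDSO G = (m : ℝ) * Real.sqrt ((Δ : ℝ)^2 + 1) / Δ ↔
      ∀ e ∈ G.edgeFinset, c = F e := by
    rw [hconst, cDSO_eq, eq_comm]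
    exact Finset.sum_eq_sum_iff_of_le hFge
  rw [hiff1]
  have hiff2 : (∀ e ∈ G.edgeFinset, c = F e) ↔
      (∀ x y, G.Adj x y → (min (G.degree x) (G.degree y) = 1 ∧
        max (G.degree x) (G.degree y) = Δ)) := by
    constructor
    · intro h x y hxy
      exact (hkey hxy).2.mp ((h s(x,y) (by rw [mem_edgeFinset, mem_edgeSet]; exact hxy)).symm)
    · intro h e
      induction e using Sym2.ind with
      | _ x y =>
        intro he
        rw [mem_edgeFinset, mem_edgeSet] at he
        exact ((hkey he).2.mpr (h x y he)).symm
  rw [hiff2]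
  constructor
  · -- Cond → iso
    intro hcond
    have hne : Nonempty V := hconn.nonempty
    obtain ⟨v, hv⟩ := G.exists_maximal_degree_vertex
    have hnb : ∀ u, G.Adj v u → G.degree u = 1 := by
      intro u hu
      have h1 : 1 ≤ G.degree u := hdeg1 hu.symm
      have h2 : G.degree u ≤ Δ := G.degree_le_maxDegree u
      obtain ⟨hmin, hmax⟩ := hcond v u hu
      rcases le_total (G.degree v) (G.degree u) with h | h
      · rw [min_eq_left h] at hmin
        omega
      · rw [min_eq_right h] at hmin
        exact hmin
    have honly : ∀ u, G.Adj v u → ∀ w, G.Adj u w → w = v := by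
      intro u hu w hw
      have hcard : (G.neighborFinset u).card ≤ 1 := le_of_eq (hnb u hu)
      exact Finset.card_le_one.mp hcard w ((G.mem_neighborFinset u w).mpr hw) v
        ((G.mem_neighborFinset u v).mpr hu.symm)
    have huniv : ∀ w, w = v ∨ G.Adj v w := by
      have main : ∀ (a b : V) (p : G.Walk a b), (a = v ∨ G.Adj v a) → (b = v ∨ G.Adj v b) := by
        intro a b p
        induction p with
        | nil => exact id
        | @cons a x b h q ih =>
          intro ha
          apply ih
          rcases ha with rfl | ha
          · exact Or.inr h
          · exact Or.inl (honly a ha x h)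
      intro w
      obtain ⟨p⟩ := hconn.preconnected v w
      exact main v w p (Or.inl rfl)
    have hvN : v ∉ G.neighborFinset v := by
      simp
    have hunivF : (Finset.univ : Finset V) = insert v (G.neighborFinset v) := by
      ext w
      simp only [Finset.mem_univ, true_iff, Finset.mem_insert, mem_neighborFinset]
      rcases huniv w with h | h
      · exact Or.inl h
      · exact Or.inr h
    have hsumdeg : ∑ w, G.degree w = 2 * Δ := by
      rw [hunivF, Finset.sum_insert hvN, ← hv]
      have : ∑ u ∈ G.neighborFinset v, G.degree u = ∑ u ∈ G.neighborFinset v, 1 := by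
        apply Finset.sum_congr rfl
        intro u hu
        exact hnb u ((G.mem_neighborFinset v u).mp hu)
      rw [this, Finset.sum_const, smul_eq_mul, mul_one]
      have : (G.neighborFinset v).card = G.degree v := rfl
      rw [this, ← hv]
      ring
    have hmΔ : m = Δ := by
      have h2 := G.sum_degrees_eq_twice_card_edges
      rw [hsumdeg, ← hm] at h2
      omega
    have hcardN : (G.neighborFinset v).card = m := by
      have : (G.neighborFinset v).card = G.degree v := rfl
      rw [this, ← hv, hmΔ]
    let e1 : {x // x ∈ G.neighborFinset v} ≃ Fin m :=
      Fintype.equivFinOfCardEq (by rw [Fintype.card_coe]; exact hcardN)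
    refine ⟨⟨⟨fun x => if h : G.Adj v x then Sum.inr (e1 ⟨x, (G.mem_neighborFinset v x).mpr h⟩)
        else Sum.inl 0,
      fun s => Sum.elim (fun _ => v) (fun i => ((e1.symm i : {x // x ∈ G.neighborFinset v}) : V)) s,
      ?_, ?_⟩, ?_⟩⟩
    · intro x
      by_cases h : G.Adj v x
      · simp [h]
      · have hx : x = v := (huniv x).resolve_right h
        simp [h, hx]
    · intro s
      cases s with
      | inl a =>
        have : ¬ G.Adj v v := G.irrefl
        simp [this, Subsingleton.elim (0 : Fin 1) a]
      | inr i =>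
        have hmem := (e1.symm i).2
        have hadj : G.Adj v ((e1.symm i : {x // x ∈ G.neighborFinset v}) : V) :=
          (G.mem_neighborFinset v _).mp hmem
        simp only [Sum.elim_inr, hadj, dif_pos]
        congr 1
        have : (⟨((e1.symm i : {x // x ∈ G.neighborFinset v}) : V), _⟩ :
            {x // x ∈ G.neighborFinset v}) = e1.symm i := Subtype.ext rfl
        show (if h : G.Adj v ((e1.symm i : {x // x ∈ G.neighborFinset v}) : V) then
          Sum.inr (e1 ⟨_, (G.mem_neighborFinset v _).mpr h⟩) else Sum.inl 0) = Sum.inr i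
        rw [dif_pos hadj]
        simp
    · intro x y
      by_cases hx : G.Adj v x <;> by_cases hy : G.Adj v y
      · simp only [Equiv.coe_fn_mk, dif_pos hx, dif_pos hy]
        constructor
        · intro h
          exact absurd h (by simp)
        · intro hxy
          have hyV : y = v := honly x hx y hxy
          rw [hyV] at hy
          exact absurd hy G.irrefl
      · have hyv : y = v := (huniv y).resolve_right hy
        subst hyv
        simp only [Equiv.coe_fn_mk, dif_pos hx, dif_neg hy]
        simp [hx.symm]
      · have hxv : x = v := (huniv x).resolve_right hx
        subst hxv
        simp only [Equiv.coe_fn_mk, dif_neg hx, dif_pos hy]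
        simp [hy]
      · have hxv : x = v := (huniv x).resolve_right hx
        have hyv : y = v := (huniv y).resolve_right hy
        subst hxv; subst hyv
        simp [hx]
  · -- iso → Cond
    rintro ⟨φ⟩
    set K := completeBipartiteGraph (Fin 1) (Fin m) with hK
    have hdeg : ∀ x : V, G.degree x = K.degree (φ x) := fun x => iso_degree φ x
    have hdegval : ∀ x : V, G.degree x = 1 ∨ G.degree x = m := by
      intro x
      rw [hdeg x]
      cases hφx : φ x with
      | inl a => exact Or.inr (cbg_degree_inl m a)
      | inr b => exact Or.inl (cbg_degree_inr m b)
    have hΔm : Δ = m := by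
      apply le_antisymm
      · apply maxDegree_le_of_forall_degree_le
        intro x
        rcases hdegval x with h | h <;> omega
      · have : G.degree (φ.symm (Sum.inl 0)) = m := by
          rw [hdeg, RelIso.apply_symm_apply, cbg_degree_inl]
        rw [← this]
        exact G.degree_le_maxDegree _
    intro x y hxy
    have hKadj : K.Adj (φ x) (φ y) := φ.map_adj_iff.mpr hxy
    cases hφx : φ x with
    | inl a =>
      cases hφy : φ y with
      | inl b => rw [hφx, hφy] at hKadj; simp [hK] at hKadj
      | inr b =>
        have hdx : G.degree x = m := by rw [hdeg, hφx]; exact cbg_degree_inl m a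
        have hdy : G.degree y = 1 := by rw [hdeg, hφy]; exact cbg_degree_inr m b
        rw [hdx, hdy, hΔm]
        constructor
        · rcases le_total m 1 with h | h
          · rw [min_eq_left h]; omega
          · rw [min_eq_right h]
        · rcases le_total m 1 with h | h
          · rw [max_eq_right h]; omega
          · rw [max_eq_left h]
    | inr a =>
      cases hφy : φ y with
      | inr b => rw [hφx, hφy] at hKadj; simp [hK] at hKadj
      | inl b =>
        have hdx : G.degree x = 1 := by rw [hdeg, hφx]; exact cbg_degree_inr m a
        have hdy : G.degree y = m := by rw [hdeg, hφy]; exact cbg_degree_inl m b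
        rw [hdx, hdy, hΔm]
        constructor
        · rcases le_total 1 m with h | h
          · rw [min_eq_left h]
          · rw [min_eq_right h]; omega
        · rcases le_total 1 m with h | h
          · rw [max_eq_right h]
          · rw [max_eq_left h]; omega
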